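/- Let n, d ∈ ℕ with d ≤ n, S ⊆ [n], and I, J ∈ P_d(n), and let B = Z_{d(S)}^{-1}. Then: (a) if I ⊄ J ∪ S, then B_{I,J} = 0; (b) if I ⊆ J ∪ S and |I ∪ J| > d, then B_{I,J} = 0; (c) if I ⊆ J ∪ S, |I ∪ J| ≤ d and S ⊆ I ∪ J, then B_{I,J} = (−1)^{|J ∩ S| + |J \ I|}; (d) if I ⊆ J ∪ S, |I ∪ J| ≤ d and S ⊄ I ∪ J, then B_{I,J} = (−1)^{|J ∩ S| + |J \ I| + d − |I ∪ J|} · C(|S \ (I ∪ J)| − 1, d − |I ∪ J|), where C(a,b) denotes the binomial coefficient (equal to 0 when b > a). -/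

import Mathlib

open Finset Matrix

/-- The matrix `Z_{d(S)}` with entries 1 if `I ⊆ J △ S` and 0 otherwise. -/
noncomputable def ZdS (n d : ℕ) (S : Finset (Fin n)) :
    Matrix {J : Finset (Fin n) // J.card ≤ d} {J : Finset (Fin n) // J.card ≤ d} ℝ :=
  Matrix.of fun I J =>
    if (I : Finset (Fin n)) ⊆ symmDiff (J : Finset (Fin n)) S then 1 else 0


noncomputable section ZdSAux

/-- Generalized binomial coefficient `gb a k` = binom(a, k) for integer `a`, natural `k`. -/
def gb (a : ℤ) (k : ℕ) : ℝ :=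
  if 0 ≤ a then (a.toNat.choose k : ℝ)
  else (-1 : ℝ) ^ k * ((k + (-a).toNat - 1).choose k : ℝ)

/-- Extension with integer second argument, zero for negative. -/
def gbz (a j : ℤ) : ℝ := if 0 ≤ j then gb a j.toNat else 0

lemma gb_natCast (t : ℕ) (k : ℕ) : gb (t : ℤ) k = (t.choose k : ℝ) := by
  simp [gb]

lemma gb_neg_one (k : ℕ) : gb (-1) k = (-1 : ℝ) ^ k := by
  have h : (k + ((1:ℤ)).toNat - 1).choose k = 1 := by
    have h1 : k + ((1:ℤ)).toNat - 1 = k := by omega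
    rw [h1, Nat.choose_self]
  simp [gb, h]

lemma gb_zero (a : ℤ) : gb a 0 = 1 := by
  unfold gb
  split <;> simp

lemma gb_pascal (a : ℤ) (k : ℕ) : gb (a + 1) (k + 1) = gb a (k + 1) + gb a k := by
  rcases le_or_gt 0 a with ha | ha
  · have ha1 : (0:ℤ) ≤ a + 1 := by omega
    have h1 : (a + 1).toNat = a.toNat + 1 := by omega
    simp only [gb, if_pos ha, if_pos ha1, h1, Nat.choose_succ_succ]
    push_cast; ring
  · rcases eq_or_lt_of_le (show a ≤ -1 by omega) with rfl | ha2
    · have h0 : (-1 : ℤ) + 1 = 0 := by ring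
      have hg : gb 0 (k+1) = 0 := by
        rw [gb, if_pos le_rfl]
        simp [Nat.choose_eq_zero_of_lt]
      rw [h0, hg, gb_neg_one, gb_neg_one]
      ring
    · have ha1 : ¬ (0:ℤ) ≤ a + 1 := by omega
      have ha0 : ¬ (0:ℤ) ≤ a := by omega
      set t : ℕ := (-a).toNat with ht
      have ht2 : 2 ≤ t := by omega
      have h1 : (-(a+1)).toNat = t - 1 := by omega
      simp only [gb, if_neg ha1, if_neg ha0, h1]
      have e1 : k + 1 + (t - 1) - 1 = k + t - 1 := by omega
      have e2 : k + 1 + t - 1 = (k + t - 1) + 1 := by omega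
      rw [e1, e2, Nat.choose_succ_succ]
      push_cast; ring

lemma gb_reflect (a : ℤ) (k : ℕ) : (-1 : ℝ) ^ k * gb a k = gb ((k : ℤ) - a - 1) k := by
  rcases le_or_gt 0 a with ha | ha
  · rcases le_or_gt (0:ℤ) ((k:ℤ) - a - 1) with hb | hb
    · -- a ≤ k - 1, both sides are zero unless ... here a < k so choose a k = 0
      have h1 : a.toNat < k := by omega
      have h2 : ((k:ℤ) - a - 1).toNat < k := by omega
      rw [gb, gb, if_pos ha, if_pos hb, Nat.choose_eq_zero_of_lt h1,
        Nat.choose_eq_zero_of_lt h2]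
      simp
    · rw [gb, gb, if_pos ha, if_neg (by omega)]
      have h1 : k + (-(( k:ℤ) - a - 1)).toNat - 1 = a.toNat := by omega
      rw [h1]
  · rw [gb, gb, if_neg (by omega), if_pos (by omega)]
    have h1 : ((k:ℤ) - a - 1).toNat = k + (-a).toNat - 1 := by omega
    rw [h1, ← mul_assoc, ← pow_add]
    have he : Even (k + k) := ⟨k, rfl⟩
    rw [he.neg_one_pow, one_mul]

lemma gbz_pascal (a t : ℤ) : gbz (a + 1) t = gbz a t + gbz a (t - 1) := by
  rcases lt_trichotomy t 0 with h | h | h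
  · rw [gbz, gbz, gbz, if_neg (by omega), if_neg (by omega), if_neg (by omega)]
    ring
  · subst h
    rw [gbz, gbz, gbz, if_pos le_rfl, if_pos le_rfl, if_neg (by omega)]
    simp [gb_zero]
  · have h1 : (0:ℤ) ≤ t := by omega
    have h2 : (0:ℤ) ≤ t - 1 := by omega
    rw [gbz, gbz, gbz, if_pos h1, if_pos h1, if_pos h2]
    have h3 : t.toNat = (t-1).toNat + 1 := by omega
    rw [h3, gb_pascal]

lemma gbz_vandermonde (m : ℕ) (b : ℤ) (t : ℤ) :
    ∑ x ∈ Finset.range (m + 1), (m.choose x : ℝ) * gbz b (t - x) = gbz ((m : ℤ) + b) t := by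
  induction m generalizing t with
  | zero => simp
  | succ m ih =>
    have key : ∀ x : ℕ, x ∈ Finset.range (m+1) →
        (((m+1).choose (x+1) : ℕ) : ℝ) * gbz b (t - ((x+1 : ℕ) : ℤ))
        = (m.choose (x+1) : ℝ) * gbz b (t - ((x+1 : ℕ) : ℤ))
          + (m.choose x : ℝ) * gbz b ((t-1) - (x : ℤ)) := by
      intro x _
      have h1 : t - ((x+1 : ℕ) : ℤ) = (t-1) - (x : ℤ) := by push_cast; ring
      rw [Nat.choose_succ_succ, h1]
      push_cast
      ring
    rw [Finset.sum_range_succ' (fun x => (((m+1).choose x : ℕ) : ℝ) * gbz b (t - (x : ℤ))) (m+1)]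
    rw [Finset.sum_congr rfl key, Finset.sum_add_distrib, ih (t-1)]
    have hA : (∑ x ∈ Finset.range (m+1),
          (m.choose (x+1) : ℝ) * gbz b (t - ((x+1 : ℕ) : ℤ)))
        + (((m+1).choose 0 : ℕ) : ℝ) * gbz b (t - ((0:ℕ) : ℤ)) = gbz ((m : ℤ) + b) t := by
      have h0 : (((m+1).choose 0 : ℕ) : ℝ) * gbz b (t - ((0:ℕ) : ℤ))
          = ((m.choose 0 : ℕ) : ℝ) * gbz b (t - ((0:ℕ) : ℤ)) := by simp
      rw [h0,
        ← Finset.sum_range_succ' (fun x => ((m.choose x : ℕ) : ℝ) * gbz b (t - (x : ℤ))) (m+1)]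
      rw [Finset.sum_range_succ]
      rw [Nat.choose_succ_self]
      rw [← ih t]
      push_cast
      ring
    have hp : ((m+1 : ℕ) : ℤ) + b = ((m : ℤ) + b) + 1 := by push_cast; ring
    rw [hp, gbz_pascal]
    linarith [hA]


lemma neg_one_pow_cancel (k : ℕ) : (-1 : ℝ) ^ k * (-1 : ℝ) ^ k = 1 := by
  rw [← pow_add]
  exact Even.neg_one_pow ⟨k, rfl⟩

lemma core_identity (m M r e : ℕ) (h : r + M ≤ e) :
    ∑ x ∈ Finset.range (m+1), ∑ y ∈ Finset.range (M+1),
      (m.choose x : ℝ) * (M.choose y : ℝ) *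
        (if x + y ≤ e then (-1:ℝ)^y *
          (if x = m ∧ r = 0 then 1 else (-1:ℝ)^(e-x-y) * ((r+m-x-1).choose (e-x-y) : ℝ))
         else 0)
    = if r = 0 ∧ M = 0 then 1 else 0 := by
  -- Step 1: pointwise rewrite to gbz form
  have step1 : ∀ x ∈ Finset.range (m+1), ∀ y ∈ Finset.range (M+1),
      (m.choose x : ℝ) * (M.choose y : ℝ) *
        (if x + y ≤ e then (-1:ℝ)^y *
          (if x = m ∧ r = 0 then 1 else (-1:ℝ)^(e-x-y) * ((r+m-x-1).choose (e-x-y) : ℝ))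
         else 0)
      = (M.choose y : ℝ) * (-1:ℝ)^y *
          ((m.choose x : ℝ) * gbz ((e:ℤ)-y-r-m) (((e:ℤ)-y) - x)) := by
    intro x hx y hy
    have hxm : x ≤ m := by simpa using Nat.lt_succ_iff.mp (Finset.mem_range.mp hx)
    by_cases hxe : x + y ≤ e
    · rw [if_pos hxe]
      set k : ℕ := e - x - y with hk
      have hk0 : (0:ℤ) ≤ (e:ℤ) - y - x := by omega
      have harg : ((e:ℤ)-y) - x = (e:ℤ) - y - x := by ring
      have hgbz : gbz ((e:ℤ)-y-r-m) (((e:ℤ)-y) - x) = gb ((e:ℤ)-y-r-m) k := by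
        rw [harg, gbz, if_pos hk0]
        congr 1
        omega
      have hinner : (if x = m ∧ r = 0 then (1:ℝ)
            else (-1:ℝ)^k * ((r+m-x-1).choose k : ℝ))
          = (-1:ℝ)^k * gb ((r:ℤ)+m-x-1) k := by
        by_cases hc : x = m ∧ r = 0
        · rw [if_pos hc]
          have : (r:ℤ)+m-x-1 = -1 := by omega
          rw [this, gb_neg_one, neg_one_pow_cancel]
        · rw [if_neg hc]
          have h1 : (r:ℤ)+m-x-1 = ((r+m-x-1 : ℕ) : ℤ) := by omega
          rw [h1, gb_natCast]
      have hrefl : (-1:ℝ)^k * gb ((r:ℤ)+m-x-1) k = gb ((e:ℤ)-y-r-m) k := by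
        rw [gb_reflect]
        congr 1
        omega
      rw [hinner, hrefl, ← hgbz]
      ring
    · rw [if_neg hxe]
      have : gbz ((e:ℤ)-y-r-m) (((e:ℤ)-y) - x) = 0 := by
        rw [gbz, if_neg (by omega)]
      rw [this]
      ring
  rw [Finset.sum_congr rfl (fun x hx => Finset.sum_congr rfl (step1 x hx))]
  rw [Finset.sum_comm]
  -- Step 2: inner Vandermonde over x
  have step2 : ∀ y ∈ Finset.range (M+1),
      ∑ x ∈ Finset.range (m+1), (M.choose y : ℝ) * (-1:ℝ)^y *
          ((m.choose x : ℝ) * gbz ((e:ℤ)-y-r-m) (((e:ℤ)-y) - x))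
      = (M.choose y : ℝ) * ((-1:ℝ)^e * gbz ((r:ℤ)-1) ((e:ℤ)-y)) := by
    intro y hy
    have hyM : y ≤ M := by simpa using Nat.lt_succ_iff.mp (Finset.mem_range.mp hy)
    have hye : y ≤ e := by omega
    rw [← Finset.mul_sum, gbz_vandermonde m ((e:ℤ)-y-r-m) ((e:ℤ)-y)]
    have h1 : (m:ℤ) + ((e:ℤ)-y-r-m) = (e:ℤ)-y-r := by ring
    rw [h1]
    set k : ℕ := e - y with hk
    have h2 : gbz ((e:ℤ)-y-r) ((e:ℤ)-y) = gb ((e:ℤ)-y-r) k := by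
      rw [gbz, if_pos (by omega)]
      congr 1
      omega
    have h3 : (e:ℤ)-y-r = (k:ℤ) - ((r:ℤ)-1) - 1 := by omega
    have h4 : gb ((e:ℤ)-y-r) k = (-1:ℝ)^k * gb ((r:ℤ)-1) k := by
      rw [h3, ← gb_reflect]
    have h5 : gbz ((r:ℤ)-1) ((e:ℤ)-y) = gb ((r:ℤ)-1) k := by
      rw [gbz, if_pos (by omega)]
      congr 1
      omega
    rw [h2, h4, h5]
    have h6 : (-1:ℝ)^y * (-1:ℝ)^k = (-1:ℝ)^e := by
      rw [← pow_add]
      congr 1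
      omega
    calc (M.choose y : ℝ) * (-1:ℝ)^y * ((-1:ℝ)^k * gb ((r:ℤ)-1) k)
        = (M.choose y : ℝ) * (((-1:ℝ)^y * (-1:ℝ)^k) * gb ((r:ℤ)-1) k) := by ring
      _ = (M.choose y : ℝ) * ((-1:ℝ)^e * gb ((r:ℤ)-1) k) := by rw [h6]
  rw [Finset.sum_congr rfl step2]
  -- Step 3: outer Vandermonde over y
  have step3 : ∑ y ∈ Finset.range (M+1),
      (M.choose y : ℝ) * ((-1:ℝ)^e * gbz ((r:ℤ)-1) ((e:ℤ)-y))
      = (-1:ℝ)^e * gbz ((M:ℤ) + ((r:ℤ)-1)) (e:ℤ) := by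
    rw [← gbz_vandermonde M ((r:ℤ)-1) (e:ℤ), Finset.mul_sum]
    exact Finset.sum_congr rfl fun y _ => by ring
  rw [step3]
  -- Step 4: final evaluation
  by_cases hc : r = 0 ∧ M = 0
  · rw [if_pos hc]
    obtain ⟨hr, hM⟩ := hc
    have h1 : (M:ℤ) + ((r:ℤ)-1) = -1 := by omega
    rw [h1, gbz, if_pos (by omega)]
    have h2 : ((e:ℤ)).toNat = e := by omega
    rw [h2, gb_neg_one, neg_one_pow_cancel]
  · rw [if_neg hc]
    have hMr : 1 ≤ M + r := by omega
    have h1 : (M:ℤ) + ((r:ℤ)-1) = ((M + r - 1 : ℕ) : ℤ) := by omega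
    rw [h1, gbz, if_pos (by omega)]
    have h2 : ((e:ℤ)).toNat = e := by omega
    rw [h2, gb_natCast, Nat.choose_eq_zero_of_lt (by omega)]
    simp


lemma neg_one_pow_congr_mod (a b : ℕ) (h : a % 2 = b % 2) : (-1:ℝ)^a = (-1:ℝ)^b := by
  conv_lhs => rw [← Nat.div_add_mod a 2]
  conv_rhs => rw [← Nat.div_add_mod b 2]
  rw [pow_add, pow_add, pow_mul, pow_mul, h]
  norm_num

lemma alt_sum {α : Type*} [DecidableEq α] (Q : Finset α) :
    ∑ p ∈ Q.powerset, (-1:ℝ)^p.card = if Q = ∅ then 1 else 0 := by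
  rw [Finset.sum_powerset]
  have h1 : ∀ j ∈ Finset.range (Q.card+1),
      ∑ t ∈ Finset.powersetCard j Q, (-1:ℝ)^t.card
      = (-1:ℝ)^j * 1^(Q.card - j) * (Q.card.choose j : ℝ) := by
    intro j _
    rw [Finset.sum_powersetCard j Q (fun k => (-1:ℝ)^k), nsmul_eq_mul]
    rw [one_pow]
    ring
  rw [Finset.sum_congr rfl h1, ← add_pow (-1:ℝ) 1 Q.card]
  rw [show (-1:ℝ)+1 = 0 by ring, zero_pow_eq]
  simp [Finset.card_eq_zero]

lemma sum_powerset_card {α : Type*} [DecidableEq α] (Q : Finset α) (F : ℕ → ℝ) :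
    ∑ t ∈ Q.powerset, F t.card = ∑ k ∈ Finset.range (Q.card+1), (Q.card.choose k : ℝ) * F k := by
  rw [Finset.sum_powerset]
  refine Finset.sum_congr rfl fun j _ => ?_
  rw [Finset.sum_powersetCard j Q F, nsmul_eq_mul]

/-- The candidate inverse entry. -/
def ent (n d : ℕ) (S : Finset (Fin n)) (I J : Finset (Fin n)) : ℝ :=
  if I ⊆ J ∪ S ∧ (I ∪ J).card ≤ d then
    (-1:ℝ)^((J ∩ S).card + (J \ I).card) *
      (if S ⊆ I ∪ J then 1
       else (-1:ℝ)^(d - (I ∪ J).card) *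
         (((S \ (I ∪ J)).card - 1).choose (d - (I ∪ J).card) : ℝ))
  else 0

set_option maxHeartbeats 2000000 in
lemma key_sum (n d : ℕ) (S : Finset (Fin n)) (I K : {J : Finset (Fin n) // J.card ≤ d}) :
    ∑ J : {J : Finset (Fin n) // J.card ≤ d},
      ent n d S I.1 J.1 * (if J.1 ⊆ symmDiff K.1 S then 1 else 0)
    = if I = K then 1 else 0 := by
  classical
  set T := symmDiff K.1 S with hT
  have hTe : ∀ a : Fin n, a ∈ T ↔ (a ∈ K.1 ∧ a ∉ S) ∨ (a ∈ S ∧ a ∉ K.1) := by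
    intro a; rw [hT]; exact Finset.mem_symmDiff
  -- Step 1: reduce to a sum over the powerset of T
  have e1 : ∑ J : {J : Finset (Fin n) // J.card ≤ d},
      ent n d S I.1 J.1 * (if J.1 ⊆ T then 1 else 0)
      = ∑ J ∈ T.powerset, ent n d S I.1 J := by
    rw [← Finset.sum_subtype (Finset.univ.filter (fun J : Finset (Fin n) => J.card ≤ d))
      (by simp) (fun J => ent n d S I.1 J * (if J ⊆ T then 1 else 0))]
    simp only [mul_ite, mul_one, mul_zero]
    rw [← Finset.sum_filter]
    refine Finset.sum_subset ?_ ?_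
    · intro J hJ
      simp only [Finset.mem_filter, Finset.mem_univ, true_and] at hJ
      exact Finset.mem_powerset.mpr hJ.2
    · intro J hJ hJn
      simp only [Finset.mem_filter, Finset.mem_univ, true_and] at hJn
      have hJT : J ⊆ T := Finset.mem_powerset.mp hJ
      have hcard : ¬ J.card ≤ d := fun h => hJn ⟨h, hJT⟩
      rw [ent, if_neg]
      rintro ⟨-, h2⟩
      exact hcard (le_trans (Finset.card_le_card Finset.subset_union_right) h2)
  rw [e1]
  set A := I.1 \ S with hA
  have hAe : ∀ a : Fin n, a ∈ A ↔ a ∈ I.1 ∧ a ∉ S := by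
    intro a; rw [hA]; exact Finset.mem_sdiff
  have hIcond : ∀ J : Finset (Fin n), I.1 ⊆ J ∪ S ↔ A ⊆ J := by
    intro J
    constructor
    · intro h a ha
      rcases (hAe a).mp ha with ⟨haI, haS⟩
      rcases Finset.mem_union.mp (h haI) with h' | h'
      · exact h'
      · exact absurd h' haS
    · intro h a ha
      by_cases haS : a ∈ S
      · exact Finset.mem_union.mpr (Or.inr haS)
      · exact Finset.mem_union.mpr (Or.inl (h ((hAe a).mpr ⟨ha, haS⟩)))
  by_cases hAT : A ⊆ T
  swap
  · -- A not contained in T : everything vanishes and I ≠ K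
    rw [Finset.sum_eq_zero, if_neg]
    · intro hIK
      apply hAT
      intro a ha
      rcases (hAe a).mp ha with ⟨haI, haS⟩
      rw [hTe]
      left
      rw [← hIK]
      exact ⟨haI, haS⟩
    · intro J hJ
      rw [ent, if_neg]
      rintro ⟨h1, -⟩
      exact hAT (Finset.Subset.trans ((hIcond J).mp h1) (Finset.mem_powerset.mp hJ))
  -- Main case
  set P := (I.1 ∩ S) \ K.1 with hP
  set QS := S \ (K.1 ∪ I.1) with hQS
  set QN := K.1 \ (S ∪ I.1) with hQN
  set R := (K.1 ∩ S) \ I.1 with hR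
  have hPe : ∀ a : Fin n, a ∈ P ↔ a ∈ I.1 ∧ a ∈ S ∧ a ∉ K.1 := by
    intro a; rw [hP]; simp only [Finset.mem_sdiff, Finset.mem_inter]; tauto
  have hQSe : ∀ a : Fin n, a ∈ QS ↔ a ∈ S ∧ a ∉ K.1 ∧ a ∉ I.1 := by
    intro a; rw [hQS]; simp only [Finset.mem_sdiff, Finset.mem_union]; tauto
  have hQNe : ∀ a : Fin n, a ∈ QN ↔ a ∈ K.1 ∧ a ∉ S ∧ a ∉ I.1 := by
    intro a; rw [hQN]; simp only [Finset.mem_sdiff, Finset.mem_union]; tauto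
  have hRe : ∀ a : Fin n, a ∈ R ↔ a ∈ K.1 ∧ a ∈ S ∧ a ∉ I.1 := by
    intro a; rw [hR]; simp only [Finset.mem_sdiff, Finset.mem_inter]; tauto
  set i := I.1.card with hi
  set m := QS.card with hm
  set M := QN.card with hM
  set r := R.card with hr
  have hid : i ≤ d := I.2
  set e := d - i with he
  set W : ℕ → ℕ → ℝ := fun a b =>
    if a + b ≤ e then (-1:ℝ)^b *
      (if a = m ∧ r = 0 then 1 else (-1:ℝ)^(e-a-b) * ((r+m-a-1).choose (e-a-b) : ℝ))
    else 0 with hW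
  -- restrict the powerset sum to sets containing A
  have e2 : ∑ J ∈ T.powerset.filter (fun J => A ⊆ J), ent n d S I.1 J
      = ∑ J ∈ T.powerset, ent n d S I.1 J := by
    refine Finset.sum_filter_of_ne ?_
    intro J hJ hne
    by_contra hAJ
    apply hne
    rw [ent, if_neg]
    rintro ⟨h1, -⟩
    exact hAJ ((hIcond J).mp h1)
  rw [← e2]
  -- the bijection with the triple product
  have hbij : ∑ z ∈ P.powerset ×ˢ QS.powerset ×ˢ QN.powerset,
      ent n d S I.1 (A ∪ z.1 ∪ z.2.1 ∪ z.2.2)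
      = ∑ J ∈ T.powerset.filter (fun J => A ⊆ J), ent n d S I.1 J := by
    refine Finset.sum_nbij' (fun z => A ∪ z.1 ∪ z.2.1 ∪ z.2.2)
      (fun J => (J ∩ P, J ∩ QS, J ∩ QN)) ?_ ?_ ?_ ?_ ?_
    · rintro ⟨p, x, y⟩ hz
      simp only [Finset.mem_product, Finset.mem_powerset] at hz
      obtain ⟨hp, hx, hy⟩ := hz
      simp only [Finset.mem_filter, Finset.mem_powerset]
      constructor
      · intro a ha
        simp only [Finset.mem_union] at ha
        have h1 : a ∈ p → a ∈ I.1 ∧ a ∈ S ∧ a ∉ K.1 := fun h => (hPe a).mp (hp h)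
        have h2 : a ∈ x → a ∈ S ∧ a ∉ K.1 ∧ a ∉ I.1 := fun h => (hQSe a).mp (hx h)
        have h3 : a ∈ y → a ∈ K.1 ∧ a ∉ S ∧ a ∉ I.1 := fun h => (hQNe a).mp (hy h)
        have h4 : a ∈ A → a ∈ T := fun h => hAT h
        rw [hTe]
        rcases ha with ((ha | ha) | ha) | ha
        · have := h4 ha; rw [hTe] at this; exact this
        · exact Or.inr ⟨(h1 ha).2.1, (h1 ha).2.2⟩
        · exact Or.inr ⟨(h2 ha).1, (h2 ha).2.1⟩
        · exact Or.inl ⟨(h3 ha).1, (h3 ha).2.1⟩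
      · intro a ha
        simp only [Finset.mem_union]
        tauto
    · intro J hJ
      simp only [Finset.mem_product, Finset.mem_powerset]
      exact ⟨Finset.inter_subset_right, Finset.inter_subset_right, Finset.inter_subset_right⟩
    · rintro ⟨p, x, y⟩ hz
      simp only [Finset.mem_product, Finset.mem_powerset] at hz
      obtain ⟨hp, hx, hy⟩ := hz
      have g1 : (A ∪ p ∪ x ∪ y) ∩ P = p := by
        ext a
        have h1 : a ∈ p → a ∈ I.1 ∧ a ∈ S ∧ a ∉ K.1 := fun h => (hPe a).mp (hp h)
        have h2 : a ∈ x → a ∈ S ∧ a ∉ K.1 ∧ a ∉ I.1 := fun h => (hQSe a).mp (hx h)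
        have h3 : a ∈ y → a ∈ K.1 ∧ a ∉ S ∧ a ∉ I.1 := fun h => (hQNe a).mp (hy h)
        simp only [Finset.mem_inter, Finset.mem_union, hPe, hAe]
        tauto
      have g2 : (A ∪ p ∪ x ∪ y) ∩ QS = x := by
        ext a
        have h1 : a ∈ p → a ∈ I.1 ∧ a ∈ S ∧ a ∉ K.1 := fun h => (hPe a).mp (hp h)
        have h2 : a ∈ x → a ∈ S ∧ a ∉ K.1 ∧ a ∉ I.1 := fun h => (hQSe a).mp (hx h)
        have h3 : a ∈ y → a ∈ K.1 ∧ a ∉ S ∧ a ∉ I.1 := fun h => (hQNe a).mp (hy h)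
        simp only [Finset.mem_inter, Finset.mem_union, hQSe, hAe]
        tauto
      have g3 : (A ∪ p ∪ x ∪ y) ∩ QN = y := by
        ext a
        have h1 : a ∈ p → a ∈ I.1 ∧ a ∈ S ∧ a ∉ K.1 := fun h => (hPe a).mp (hp h)
        have h2 : a ∈ x → a ∈ S ∧ a ∉ K.1 ∧ a ∉ I.1 := fun h => (hQSe a).mp (hx h)
        have h3 : a ∈ y → a ∈ K.1 ∧ a ∉ S ∧ a ∉ I.1 := fun h => (hQNe a).mp (hy h)
        simp only [Finset.mem_inter, Finset.mem_union, hQNe, hAe]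
        tauto
      simp only [g1, g2, g3]
    · intro J hJ
      simp only [Finset.mem_filter, Finset.mem_powerset] at hJ
      obtain ⟨hJT, hAJ⟩ := hJ
      ext a
      have h1 : a ∈ J → a ∈ T := fun h => hJT h
      have h2 : a ∈ I.1 ∧ a ∉ S → a ∈ J := fun hh => hAJ ((hAe a).mpr hh)
      rw [hTe] at h1
      simp only [Finset.mem_union, Finset.mem_inter, hPe, hQSe, hQNe, hAe]
      by_cases haI : a ∈ I.1 <;> by_cases haS : a ∈ S <;> by_cases haK : a ∈ K.1 <;> tauto
    · intro z hz
      rfl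
  rw [← hbij]
  -- compute the value pointwise
  have hval : ∀ z ∈ P.powerset ×ˢ QS.powerset ×ˢ QN.powerset,
      ent n d S I.1 (A ∪ z.1 ∪ z.2.1 ∪ z.2.2)
      = (-1:ℝ)^z.1.card * W z.2.1.card z.2.2.card := by
    rintro ⟨p, x, y⟩ hz
    simp only [Finset.mem_product, Finset.mem_powerset] at hz
    obtain ⟨hp, hx, hy⟩ := hz
    have hp' : ∀ a, a ∈ p → a ∈ I.1 ∧ a ∈ S ∧ a ∉ K.1 := fun a h => (hPe a).mp (hp h)
    have hx' : ∀ a, a ∈ x → a ∈ S ∧ a ∉ K.1 ∧ a ∉ I.1 := fun a h => (hQSe a).mp (hx h)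
    have hy' : ∀ a, a ∈ y → a ∈ K.1 ∧ a ∉ S ∧ a ∉ I.1 := fun a h => (hQNe a).mp (hy h)
    set J : Finset (Fin n) := A ∪ p ∪ x ∪ y with hJ
    have hAJ : A ⊆ J := by
      intro a ha
      simp only [hJ, Finset.mem_union]
      tauto
    have hJU : I.1 ∪ J = (I.1 ∪ x) ∪ y := by
      ext a
      have h1 := hp' a
      simp only [hJ, Finset.mem_union, hAe]
      tauto
    have hdIx : Disjoint I.1 x := Finset.disjoint_left.mpr (fun {a} haI hax => (hx' a hax).2.2 haI)
    have hdIxy : Disjoint (I.1 ∪ x) y := by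
      rw [Finset.disjoint_union_left]
      constructor
      · exact Finset.disjoint_left.mpr (fun {a} haI hay => (hy' a hay).2.2 haI)
      · exact Finset.disjoint_left.mpr (fun {a} hax hay => (hy' a hay).2.1 (hx' a hax).1)
    have hcardU : (I.1 ∪ J).card = i + (x.card + y.card) := by
      rw [hJU, Finset.card_union_of_disjoint hdIxy, Finset.card_union_of_disjoint hdIx]
      ring
    have hJSe : J ∩ S = p ∪ x := by
      ext a
      have h1 := hp' a; have h2 := hx' a; have h3 := hy' a
      simp only [hJ, Finset.mem_inter, Finset.mem_union, hAe]
      tauto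
    have hdpx : Disjoint p x := Finset.disjoint_left.mpr
      (fun {a} hap hax => (hx' a hax).2.2 (hp' a hap).1)
    have hJScard : (J ∩ S).card = p.card + x.card := by
      rw [hJSe, Finset.card_union_of_disjoint hdpx]
    have hJIe : J \ I.1 = x ∪ y := by
      ext a
      have h1 := hp' a; have h2 := hx' a; have h3 := hy' a
      simp only [hJ, Finset.mem_sdiff, Finset.mem_union, hAe]
      tauto
    have hdxy : Disjoint x y := Finset.disjoint_left.mpr
      (fun {a} hax hay => (hy' a hay).2.1 (hx' a hax).1)
    have hJIcard : (J \ I.1).card = x.card + y.card := by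
      rw [hJIe, Finset.card_union_of_disjoint hdxy]
    have hSDe : S \ (I.1 ∪ J) = R ∪ (QS \ x) := by
      ext a
      have h1 := hp' a; have h2 := hx' a; have h3 := hy' a
      simp only [hJ, Finset.mem_sdiff, Finset.mem_union, hAe, hRe, hQSe]
      by_cases haK : a ∈ K.1 <;> tauto
    have hdRQ : Disjoint R (QS \ x) := Finset.disjoint_left.mpr
      (fun {a} haR haQ => ((hQSe a).mp (Finset.mem_sdiff.mp haQ).1).2.1 ((hRe a).mp haR).1)
    have hxm : x.card ≤ m := Finset.card_le_card hx
    have hSDcard : (S \ (I.1 ∪ J)).card = r + (m - x.card) := by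
      rw [hSDe, Finset.card_union_of_disjoint hdRQ, Finset.card_sdiff_of_subset hx]
    have hScond : S ⊆ I.1 ∪ J ↔ (x.card = m ∧ r = 0) := by
      rw [← Finset.sdiff_eq_empty_iff_subset, ← Finset.card_eq_zero, hSDcard]
      omega
    have hIJS : I.1 ⊆ J ∪ S := (hIcond J).mpr hAJ
    rw [ent]
    by_cases hle : x.card + y.card ≤ e
    · rw [if_pos ⟨hIJS, by rw [hcardU]; omega⟩]
      rw [hJScard, hJIcard, hW]
      simp only []
      rw [if_pos hle]
      by_cases hc : x.card = m ∧ r = 0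
      · rw [if_pos (hScond.mpr hc), if_pos hc, mul_one, mul_one]
        rw [neg_one_pow_congr_mod (p.card + x.card + (x.card + y.card)) (p.card + y.card) (by omega)]
        rw [pow_add]
      · rw [if_neg (fun h => hc (hScond.mp h)), if_neg hc]
        rw [hcardU, hSDcard]
        have e3 : d - (i + (x.card + y.card)) = e - x.card - y.card := by omega
        have e4 : r + (m - x.card) - 1 = r + m - x.card - 1 := by omega
        rw [e3, e4]
        rw [neg_one_pow_congr_mod (p.card + x.card + (x.card + y.card)) (p.card + y.card) (by omega)]
        rw [pow_add]
        ring
    · rw [if_neg, hW]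
      · simp only []
        rw [if_neg hle, mul_zero]
      · rintro ⟨-, h2⟩
        rw [hcardU] at h2
        omega
  rw [Finset.sum_congr rfl hval]
  -- factor the product sum
  rw [Finset.sum_product]
  have hfac : ∀ p ∈ P.powerset,
      ∑ z ∈ QS.powerset ×ˢ QN.powerset, (-1:ℝ)^p.card * W z.1.card z.2.card
      = (-1:ℝ)^p.card * ∑ z ∈ QS.powerset ×ˢ QN.powerset, W z.1.card z.2.card := by
    intro p _
    rw [Finset.mul_sum]
  rw [Finset.sum_congr rfl hfac, ← Finset.sum_mul, alt_sum]
  by_cases hPne : P = ∅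
  swap
  · rw [if_neg hPne, zero_mul, if_neg]
    intro hIK
    obtain ⟨a, ha⟩ := Finset.nonempty_iff_ne_empty.mpr hPne
    rcases (hPe a).mp ha with ⟨haI, haS, haK⟩
    rw [← hIK] at haK
    exact haK haI
  rw [if_pos hPne, one_mul]
  -- convert powerset sums to numeric sums and apply the core identity
  have hIK : I.1 ⊆ K.1 := by
    intro a haI
    by_cases haS : a ∈ S
    · by_contra haK
      have : a ∈ P := (hPe a).mpr ⟨haI, haS, haK⟩
      rw [hPne] at this
      exact absurd this (Finset.notMem_empty a)
    · have haA : a ∈ A := (hAe a).mpr ⟨haI, haS⟩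
      have := hAT haA
      rw [hTe] at this
      rcases this with ⟨h1, -⟩ | ⟨h1, -⟩
      · exact h1
      · exact absurd h1 haS
  have hre : r + M ≤ e := by
    have hdisj1 : Disjoint I.1 R := Finset.disjoint_left.mpr
      (fun {a} haI haR => ((hRe a).mp haR).2.2 haI)
    have hdisj2 : Disjoint (I.1 ∪ R) QN := by
      rw [Finset.disjoint_union_left]
      constructor
      · exact Finset.disjoint_left.mpr (fun {a} haI haQ => ((hQNe a).mp haQ).2.2 haI)
      · exact Finset.disjoint_left.mpr (fun {a} haR haQ => ((hQNe a).mp haQ).2.1 ((hRe a).mp haR).2.1)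
    have hsub : I.1 ∪ R ∪ QN ⊆ K.1 := by
      intro a ha
      rcases Finset.mem_union.mp ha with h | h
      · rcases Finset.mem_union.mp h with h' | h'
        · exact hIK h'
        · exact ((hRe a).mp h').1
      · exact ((hQNe a).mp h).1
    have hcard : i + r + M ≤ K.1.card := by
      have := Finset.card_le_card hsub
      rwa [Finset.card_union_of_disjoint hdisj2, Finset.card_union_of_disjoint hdisj1] at this
    have := K.2
    omega
  have hps1 : ∀ x ∈ QS.powerset,
      ∑ y ∈ QN.powerset, W x.card y.card
      = ∑ b ∈ Finset.range (M+1), (M.choose b : ℝ) * W x.card b := by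
    intro x _
    exact sum_powerset_card QN (W x.card)
  have e5 : ∑ z ∈ QS.powerset ×ˢ QN.powerset, W z.1.card z.2.card
      = ∑ a ∈ Finset.range (m+1), ∑ b ∈ Finset.range (M+1),
          (m.choose a : ℝ) * (M.choose b : ℝ) * W a b := by
    rw [Finset.sum_product, Finset.sum_congr rfl hps1,
      sum_powerset_card QS (fun a => ∑ b ∈ Finset.range (M+1), (M.choose b : ℝ) * W a b)]
    refine Finset.sum_congr rfl fun a _ => ?_
    rw [Finset.mul_sum]
    refine Finset.sum_congr rfl fun b _ => ?_
    ring
  rw [e5]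
  have hcore := core_identity m M r e hre
  rw [hW] at *
  rw [hcore]
  -- final : compare the two Kronecker deltas
  have hiff : I = K ↔ (r = 0 ∧ M = 0) := by
    constructor
    · intro h
      constructor
      · rw [hr, Finset.card_eq_zero]
        ext a
        simp only [hRe, Finset.notMem_empty, iff_false]
        rw [← h]
        rintro ⟨h1, -, h3⟩
        exact h3 h1
      · rw [hM, Finset.card_eq_zero]
        ext a
        simp only [hQNe, Finset.notMem_empty, iff_false]
        rw [← h]
        rintro ⟨h1, -, h3⟩
        exact h3 h1
    · rintro ⟨hr0, hM0⟩
      have hRempty : R = ∅ := Finset.card_eq_zero.mp hr0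
      have hQNempty : QN = ∅ := Finset.card_eq_zero.mp hM0
      have hKI : K.1 ⊆ I.1 := by
        intro a haK
        by_cases haS : a ∈ S
        · by_contra haI
          have : a ∈ R := (hRe a).mpr ⟨haK, haS, haI⟩
          rw [hRempty] at this
          exact absurd this (Finset.notMem_empty a)
        · by_contra haI
          have : a ∈ QN := (hQNe a).mpr ⟨haK, haS, haI⟩
          rw [hQNempty] at this
          exact absurd this (Finset.notMem_empty a)
      exact Subtype.ext (Finset.Subset.antisymm hIK hKI)
  by_cases hdelta : r = 0 ∧ M = 0
  · rw [if_pos hdelta, if_pos (hiff.mpr hdelta)]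
  · rw [if_neg hdelta, if_neg (fun h => hdelta (hiff.mp h))]


/-- The candidate inverse matrix. -/
def Cmat (n d : ℕ) (S : Finset (Fin n)) :
    Matrix {J : Finset (Fin n) // J.card ≤ d} {J : Finset (Fin n) // J.card ≤ d} ℝ :=
  Matrix.of fun I J => ent n d S I.1 J.1

lemma Cmat_mul (n d : ℕ) (S : Finset (Fin n)) : Cmat n d S * ZdS n d S = 1 := by
  ext I K
  rw [Matrix.mul_apply]
  simp only [Cmat, ZdS, Matrix.of_apply, Matrix.one_apply]
  exact key_sum n d S I K

lemma inv_eq_Cmat (n d : ℕ) (S : Finset (Fin n)) : (ZdS n d S)⁻¹ = Cmat n d S :=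
  Matrix.inv_eq_left_inv (Cmat_mul n d S)

end ZdSAux


theorem stmt_8 (n d : ℕ) (hd : d ≤ n) (S : Finset (Fin n))
    (I J : {J : Finset (Fin n) // J.card ≤ d}) :
    let B := (ZdS n d S)⁻¹
    (¬ I.1 ⊆ J.1 ∪ S → B I J = 0) ∧
    (I.1 ⊆ J.1 ∪ S → d < (I.1 ∪ J.1).card → B I J = 0) ∧
    (I.1 ⊆ J.1 ∪ S → (I.1 ∪ J.1).card ≤ d → S ⊆ I.1 ∪ J.1 →
      B I J = (-1 : ℝ) ^ ((J.1 ∩ S).card + (J.1 \ I.1).card)) ∧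
    (I.1 ⊆ J.1 ∪ S → (I.1 ∪ J.1).card ≤ d → ¬ S ⊆ I.1 ∪ J.1 →
      B I J = (-1 : ℝ) ^ ((J.1 ∩ S).card + (J.1 \ I.1).card + (d - (I.1 ∪ J.1).card)) *
        (Nat.choose ((S \ (I.1 ∪ J.1)).card - 1) (d - (I.1 ∪ J.1).card) : ℝ)) := by
  intro B
  have hB : B = Cmat n d S := inv_eq_Cmat n d S
  rw [hB]
  have hent : ∀ (I' J' : {J : Finset (Fin n) // J.card ≤ d}),
      Cmat n d S I' J' = ent n d S I'.1 J'.1 := fun _ _ => rfl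
  refine ⟨?_, ?_, ?_, ?_⟩
  · intro h1
    rw [hent, ent, if_neg]
    rintro ⟨h, -⟩
    exact h1 h
  · intro h1 h2
    rw [hent, ent, if_neg]
    rintro ⟨-, h⟩
    omega
  · intro h1 h2 h3
    rw [hent, ent, if_pos ⟨h1, h2⟩, if_pos h3, mul_one]
  · intro h1 h2 h3
    rw [hent, ent, if_pos ⟨h1, h2⟩, if_neg h3, pow_add]
    ring
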